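/- Let τ, β, η > 0 with 0 < η < 1/2 and τ < β, and assume (β+η²)² > 4τη². Then the four roots of the quartic q(μ;ν) = τμ⁴ + (ν²−τ)μ³ + (η²τ − (β+1)ν²)μ² + (η²+β−ν²)ν²μ + ν⁴ admit, as ν → 0, the expansions μ_{1,2}(ν) = −[(β+η²) ∓ √((β+η²)²−4τη²)]/(2τη²) · ν² + O(ν³) and μ_{3,4}(ν) = (1 ∓ √(1−4η²))/2 + O(ν). -/

import Mathlib

set_option maxHeartbeats 1000000
open Polynomial

lemma multiset_card_four {s : Multiset ℂ} (h : Multiset.card s = 4) :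
    ∃ a b c d, s = {a, b, c, d} := by
  obtain ⟨a, ha⟩ := (Multiset.card_pos_iff_exists_mem (s := s)).mp (by omega)
  obtain ⟨b, c, d, ht⟩ := Multiset.card_eq_three.mp
    (by rw [Multiset.card_erase_of_mem ha, h]; rfl : Multiset.card (s.erase a) = 3)
  exact ⟨a, b, c, d, by rw [← Multiset.cons_erase ha, ht]; rfl⟩

lemma quartic_factor (a b c d e : ℂ) (ha : a ≠ 0) :
    ∃ z₁ z₂ z₃ z₄ : ℂ, ∀ x : ℂ,
      a*x^4 + b*x^3 + c*x^2 + d*x + e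
        = a*(x - z₁)*(x - z₂)*(x - z₃)*(x - z₄) := by
  set p : ℂ[X] := C a * X^4 + C b * X^3 + C c * X^2 + C d * X + C e with hp
  have hdeg : p.natDegree = 4 := by
    unfold p; compute_degree!
  have hlead : p.leadingCoeff = a := by
    rw [Polynomial.leadingCoeff, hdeg]; unfold p
    simp [coeff_X_pow, Polynomial.coeff_one]
  have hcard : Multiset.card p.roots = 4 := by
    rw [Polynomial.splits_iff_card_roots.mp (IsAlgClosed.splits p), hdeg]
  obtain ⟨z₁, z₂, z₃, z₄, hs⟩ := multiset_card_four hcard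
  have hfac := (IsAlgClosed.splits p).eq_prod_roots
  rw [hs, hlead] at hfac
  refine ⟨z₁, z₂, z₃, z₄, fun x => ?_⟩
  have := congrArg (Polynomial.eval x) hfac
  simpa [hp, Multiset.insert_eq_cons] using this.trans (by simp [Multiset.insert_eq_cons]; ring)

lemma pick_one (d₁ d₂ d₃ d₄ R D : ℝ) (h₁ : 0 ≤ d₁) (h₂ : 0 ≤ d₂) (h₃ : 0 ≤ d₃) (h₄ : 0 ≤ d₄)
    (hR : 0 < R) (hD : d₁ * d₂ * d₃ * d₄ ≤ D)
    (h12 : ¬(d₁ < R ∧ d₂ < R)) (h13 : ¬(d₁ < R ∧ d₃ < R)) (h14 : ¬(d₁ < R ∧ d₄ < R))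
    (h23 : ¬(d₂ < R ∧ d₃ < R)) (h24 : ¬(d₂ < R ∧ d₄ < R)) (h34 : ¬(d₃ < R ∧ d₄ < R)) :
    d₁ * R^3 ≤ D ∨ d₂ * R^3 ≤ D ∨ d₃ * R^3 ≤ D ∨ d₄ * R^3 ≤ D := by
  rcases lt_or_ge d₁ R with c1 | c1
  · have g2 : R ≤ d₂ := le_of_not_gt fun h => h12 ⟨c1, h⟩
    have g3 : R ≤ d₃ := le_of_not_gt fun h => h13 ⟨c1, h⟩
    have g4 : R ≤ d₄ := le_of_not_gt fun h => h14 ⟨c1, h⟩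
    exact Or.inl (le_trans (by calc d₁*R^3 = d₁*R*R*R := by ring
      _ ≤ d₁*d₂*d₃*d₄ := by gcongr) hD)
  rcases lt_or_ge d₂ R with c2 | c2
  · have g3 : R ≤ d₃ := le_of_not_gt fun h => h23 ⟨c2, h⟩
    have g4 : R ≤ d₄ := le_of_not_gt fun h => h24 ⟨c2, h⟩
    exact Or.inr (Or.inl (le_trans (by calc d₂*R^3 = R*d₂*R*R := by ring
      _ ≤ d₁*d₂*d₃*d₄ := by gcongr) hD))
  rcases lt_or_ge d₃ R with c3 | c3
  · have g4 : R ≤ d₄ := le_of_not_gt fun h => h34 ⟨c3, h⟩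
    exact Or.inr (Or.inr (Or.inl (le_trans (by calc d₃*R^3 = R*R*d₃*R := by ring
      _ ≤ d₁*d₂*d₃*d₄ := by gcongr) hD)))
  · exact Or.inr (Or.inr (Or.inr (le_trans (by calc d₄*R^3 = R*R*R*d₄ := by ring
      _ ≤ d₁*d₂*d₃*d₄ := by gcongr) hD)))

lemma pick_two (d₁ d₂ d₃ d₄ R D : ℝ) (h₁ : 0 ≤ d₁) (h₂ : 0 ≤ d₂) (h₃ : 0 ≤ d₃) (h₄ : 0 ≤ d₄)
    (hR : 0 < R) (hD : d₁ * d₂ * d₃ * d₄ ≤ D)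
    (h123 : ¬(d₁ < R ∧ d₂ < R ∧ d₃ < R)) (h124 : ¬(d₁ < R ∧ d₂ < R ∧ d₄ < R))
    (h134 : ¬(d₁ < R ∧ d₃ < R ∧ d₄ < R)) (h234 : ¬(d₂ < R ∧ d₃ < R ∧ d₄ < R)) :
    d₁^2 * R^2 ≤ D ∨ d₂^2 * R^2 ≤ D ∨ d₃^2 * R^2 ≤ D ∨ d₄^2 * R^2 ≤ D := by
  rcases lt_or_ge d₁ R with c1 | c1
  · rcases lt_or_ge d₂ R with c2 | c2
    · have g3 : R ≤ d₃ := le_of_not_gt fun h => h123 ⟨c1, c2, h⟩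
      have g4 : R ≤ d₄ := le_of_not_gt fun h => h124 ⟨c1, c2, h⟩
      rcases le_total d₁ d₂ with hc | hc
      · exact Or.inl (le_trans (by calc d₁^2*R^2 = d₁*d₁*R*R := by ring
          _ ≤ d₁*d₂*d₃*d₄ := by gcongr) hD)
      · exact Or.inr (Or.inl (le_trans (by calc d₂^2*R^2 = d₂*d₂*R*R := by ring
          _ ≤ d₁*d₂*d₃*d₄ := by gcongr) hD))
    · rcases lt_or_ge d₃ R with c3 | c3
      · have g4 : R ≤ d₄ := le_of_not_gt fun h => h134 ⟨c1, c3, h⟩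
        rcases le_total d₁ d₃ with hc | hc
        · exact Or.inl (le_trans (by calc d₁^2*R^2 = d₁*R*d₁*R := by ring
            _ ≤ d₁*d₂*d₃*d₄ := by gcongr) hD)
        · exact Or.inr (Or.inr (Or.inl (le_trans (by calc d₃^2*R^2 = d₃*R*d₃*R := by ring
            _ ≤ d₁*d₂*d₃*d₄ := by gcongr) hD)))
      · rcases le_total d₁ d₄ with hc | hc
        · exact Or.inl (le_trans (by calc d₁^2*R^2 = d₁*R*R*d₁ := by ring
            _ ≤ d₁*d₂*d₃*d₄ := by gcongr) hD)
        · exact Or.inr (Or.inr (Or.inr (le_trans (by calc d₄^2*R^2 = d₄*R*R*d₄ := by ring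
            _ ≤ d₁*d₂*d₃*d₄ := by gcongr) hD)))
  · rcases lt_or_ge d₂ R with c2 | c2
    · rcases lt_or_ge d₃ R with c3 | c3
      · have g4 : R ≤ d₄ := le_of_not_gt fun h => h234 ⟨c2, c3, h⟩
        rcases le_total d₂ d₃ with hc | hc
        · exact Or.inr (Or.inl (le_trans (by calc d₂^2*R^2 = R*d₂*d₂*R := by ring
            _ ≤ d₁*d₂*d₃*d₄ := by gcongr) hD))
        · exact Or.inr (Or.inr (Or.inl (le_trans (by calc d₃^2*R^2 = R*d₃*d₃*R := by ring
            _ ≤ d₁*d₂*d₃*d₄ := by gcongr) hD)))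
      · rcases le_total d₂ d₄ with hc | hc
        · exact Or.inr (Or.inl (le_trans (by calc d₂^2*R^2 = R*d₂*R*d₂ := by ring
            _ ≤ d₁*d₂*d₃*d₄ := by gcongr) hD))
        · exact Or.inr (Or.inr (Or.inr (le_trans (by calc d₄^2*R^2 = R*d₄*R*d₄ := by ring
            _ ≤ d₁*d₂*d₃*d₄ := by gcongr) hD)))
    · rcases le_total d₃ d₄ with hc | hc
      · exact Or.inr (Or.inr (Or.inl (le_trans (by calc d₃^2*R^2 = R*R*d₃*d₃ := by ring
          _ ≤ d₁*d₂*d₃*d₄ := by gcongr) hD)))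
      · exact Or.inr (Or.inr (Or.inr (le_trans (by calc d₄^2*R^2 = R*R*d₄*d₄ := by ring
          _ ≤ d₁*d₂*d₃*d₄ := by gcongr) hD)))

lemma sq_to_lin (d C0 n : ℝ) (hd : 0 ≤ d) (hn : 0 ≤ n) (hC : 0 ≤ C0)
    (h : d^2 ≤ C0 * n^6) : d ≤ (C0 + 1) * n^3 := by
  by_contra hcon
  push_neg at hcon
  have h1 : 0 ≤ (C0+1) * n^3 := by positivity
  nlinarith [sq_nonneg (n^3)]


lemma norm_cubic_bound (c3 c2 c1 c0 : ℂ) (b3 b2 b1 b0 : ℝ) (z : ℂ)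
    (h3 : ‖c3‖ ≤ b3) (h2 : ‖c2‖ ≤ b2) (h1 : ‖c1‖ ≤ b1) (h0 : ‖c0‖ ≤ b0) (hz : 1 ≤ ‖z‖) :
    ‖c3*z^3 + c2*z^2 + c1*z + c0‖ ≤ (b3+b2+b1+b0) * ‖z‖^3 := by
  have hz0 : (0:ℝ) ≤ ‖z‖ := norm_nonneg z
  have hz3 : (1:ℝ) ≤ ‖z‖^3 := one_le_pow₀ hz
  have hz23 : ‖z‖^2 ≤ ‖z‖^3 := pow_le_pow_right₀ hz (by norm_num)
  have hz13 : ‖z‖ ≤ ‖z‖^3 := by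
    calc ‖z‖ = ‖z‖^1 := (pow_one _).symm
    _ ≤ ‖z‖^3 := pow_le_pow_right₀ hz (by norm_num)
  have hb0 : 0 ≤ b0 := le_trans (norm_nonneg c0) h0
  have hb1 : 0 ≤ b1 := le_trans (norm_nonneg c1) h1
  have hb2 : 0 ≤ b2 := le_trans (norm_nonneg c2) h2
  calc ‖c3*z^3 + c2*z^2 + c1*z + c0‖
      ≤ ‖c3*z^3 + c2*z^2 + c1*z‖ + ‖c0‖ := norm_add_le _ _
    _ ≤ (‖c3*z^3 + c2*z^2‖ + ‖c1*z‖) + ‖c0‖ := by gcongr; exact norm_add_le _ _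
    _ ≤ ((‖c3*z^3‖ + ‖c2*z^2‖) + ‖c1*z‖) + ‖c0‖ := by gcongr; exact norm_add_le _ _
    _ = ‖c3‖*‖z‖^3 + ‖c2‖*‖z‖^2 + ‖c1‖*‖z‖ + ‖c0‖ := by
        rw [norm_mul, norm_mul, norm_mul, norm_pow, norm_pow]
    _ ≤ b3*‖z‖^3 + b2*‖z‖^3 + b1*‖z‖^3 + b0*‖z‖^3 := by
        gcongr ?_ + ?_ + ?_ + ?_
        · exact mul_le_mul h3 le_rfl (by positivity) (le_trans (norm_nonneg c3) h3)
        · exact mul_le_mul h2 hz23 (by positivity) hb2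
        · exact mul_le_mul h1 hz13 (norm_nonneg z) hb1
        · exact le_trans h0 (le_mul_of_one_le_right hb0 hz3)
    _ = (b3+b2+b1+b0) * ‖z‖^3 := by ring


lemma norm_cubic_boundM (c3 c2 c1 c0 : ℂ) (b3 b2 b1 b0 Mv : ℝ) (z : ℂ)
    (h3 : ‖c3‖ ≤ b3) (h2 : ‖c2‖ ≤ b2) (h1 : ‖c1‖ ≤ b1) (h0 : ‖c0‖ ≤ b0)
    (hz : ‖z‖ ≤ Mv) :
    ‖c3*z^3 + c2*z^2 + c1*z + c0‖ ≤ b3*Mv^3 + b2*Mv^2 + b1*Mv + b0 := by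
  have hM0 : (0:ℝ) ≤ Mv := le_trans (norm_nonneg z) hz
  calc ‖c3*z^3 + c2*z^2 + c1*z + c0‖
      ≤ ‖c3*z^3 + c2*z^2 + c1*z‖ + ‖c0‖ := norm_add_le _ _
    _ ≤ (‖c3*z^3 + c2*z^2‖ + ‖c1*z‖) + ‖c0‖ := by gcongr; exact norm_add_le _ _
    _ ≤ ((‖c3*z^3‖ + ‖c2*z^2‖) + ‖c1*z‖) + ‖c0‖ := by gcongr; exact norm_add_le _ _
    _ = ‖c3‖*‖z‖^3 + ‖c2‖*‖z‖^2 + ‖c1‖*‖z‖ + ‖c0‖ := by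
        rw [norm_mul, norm_mul, norm_mul, norm_pow, norm_pow]
    _ ≤ b3*Mv^3 + b2*Mv^2 + b1*Mv + b0 := by
        gcongr ?_ + ?_ + ?_ + ?_
        · exact mul_le_mul h3 (pow_le_pow_left₀ (norm_nonneg z) hz 3)
            (by positivity) (le_trans (norm_nonneg c3) h3)
        · exact mul_le_mul h2 (pow_le_pow_left₀ (norm_nonneg z) hz 2)
            (by positivity) (le_trans (norm_nonneg c2) h2)
        · exact mul_le_mul h1 hz (norm_nonneg z) (le_trans (norm_nonneg c1) h1)

lemma per (τ β η : ℝ) (hτ : 0 < τ) (hβ : 0 < β) (hη : 0 < η) (hη' : η < 1 / 2)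
    (hτβ : τ < β) (hdisc : (β + η ^ 2) ^ 2 > 4 * τ * η ^ 2) :
    ∃ δ > (0 : ℝ), ∃ C > (0 : ℝ), ∀ ν : ℂ, ‖ν‖ ≤ δ →
      ∃ a b c d : ℂ,
        (((τ : ℂ) * a ^ 4 + (ν ^ 2 - τ) * a ^ 3
          + ((η : ℂ) ^ 2 * τ - ((β : ℂ) + 1) * ν ^ 2) * a ^ 2
          + ((η : ℂ) ^ 2 + β - ν ^ 2) * ν ^ 2 * a + ν ^ 4 = 0) ∧
        ((τ : ℂ) * b ^ 4 + (ν ^ 2 - τ) * b ^ 3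
          + ((η : ℂ) ^ 2 * τ - ((β : ℂ) + 1) * ν ^ 2) * b ^ 2
          + ((η : ℂ) ^ 2 + β - ν ^ 2) * ν ^ 2 * b + ν ^ 4 = 0) ∧
        ((τ : ℂ) * c ^ 4 + (ν ^ 2 - τ) * c ^ 3
          + ((η : ℂ) ^ 2 * τ - ((β : ℂ) + 1) * ν ^ 2) * c ^ 2
          + ((η : ℂ) ^ 2 + β - ν ^ 2) * ν ^ 2 * c + ν ^ 4 = 0) ∧
        ((τ : ℂ) * d ^ 4 + (ν ^ 2 - τ) * d ^ 3
          + ((η : ℂ) ^ 2 * τ - ((β : ℂ) + 1) * ν ^ 2) * d ^ 2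
          + ((η : ℂ) ^ 2 + β - ν ^ 2) * ν ^ 2 * d + ν ^ 4 = 0)) ∧
        ‖a + ((((β + η ^ 2) - Real.sqrt ((β + η ^ 2) ^ 2 - 4 * τ * η ^ 2))
            / (2 * τ * η ^ 2) : ℝ) : ℂ) * ν ^ 2‖ ≤ C * ‖ν‖ ^ 3 ∧
        ‖b + ((((β + η ^ 2) + Real.sqrt ((β + η ^ 2) ^ 2 - 4 * τ * η ^ 2))
            / (2 * τ * η ^ 2) : ℝ) : ℂ) * ν ^ 2‖ ≤ C * ‖ν‖ ^ 3 ∧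
        ‖c - (((1 - Real.sqrt (1 - 4 * η ^ 2)) / 2 : ℝ) : ℂ)‖ ≤ C * ‖ν‖ ∧
        ‖d - (((1 + Real.sqrt (1 - 4 * η ^ 2)) / 2 : ℝ) : ℂ)‖ ≤ C * ‖ν‖ := by
  -- basic constants
  have hs4 : (0:ℝ) < 4 := by norm_num
  obtain ⟨g, hgdef⟩ : ∃ x, x = Real.sqrt (1 - 4 * η ^ 2) := ⟨_, rfl⟩
  have h4η : 0 < 1 - 4 * η ^ 2 := by nlinarith
  have hg2 : g ^ 2 = 1 - 4 * η ^ 2 := by rw [hgdef]; exact Real.sq_sqrt (le_of_lt h4η)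
  have hg0 : 0 < g := by rw [hgdef]; exact Real.sqrt_pos.mpr h4η
  have hg1 : g < 1 := by nlinarith [hg2, hg0]
  obtain ⟨rm, hrmdef⟩ : ∃ x, x = (1 - g) / 2 := ⟨_, rfl⟩
  obtain ⟨rp, hrpdef⟩ : ∃ x, x = (1 + g) / 2 := ⟨_, rfl⟩
  have hrm0 : 0 < rm := by rw [hrmdef]; linarith
  have hrmh : rm < 1/2 := by rw [hrmdef]; linarith
  have hrp1 : rp ≤ 1 := by rw [hrpdef]; linarith
  have hrph : (1:ℝ)/2 ≤ rp := by rw [hrpdef]; linarith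
  have hsum : rm + rp = 1 := by rw [hrmdef, hrpdef]; ring
  have hprod : rm * rp = η ^ 2 := by rw [hrmdef, hrpdef]; linear_combination (-(1:ℝ)/4) * hg2
  obtain ⟨s, hsdef⟩ : ∃ x, x = min rm g := ⟨_, rfl⟩
  have hs0 : 0 < s := by rw [hsdef]; exact lt_min hrm0 hg0
  have hsrm : s ≤ rm := by rw [hsdef]; exact min_le_left _ _
  have hsg : s ≤ g := by rw [hsdef]; exact min_le_right _ _
  have hs1 : s ≤ 1/2 := le_trans hsrm (le_of_lt hrmh)
  -- M and K
  obtain ⟨Sc, hScdef⟩ : ∃ x, x = (1 + τ) + (η^2*τ + β + 1) + (η^2 + β + 1) + 1 := ⟨_, rfl⟩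
  have hSc0 : 0 < Sc := by rw [hScdef]; positivity
  obtain ⟨M, hMdef⟩ : ∃ x, x = 1 + Sc / τ := ⟨_, rfl⟩
  have hM2 : 2 ≤ M := by
    rw [hMdef, hScdef]
    have : (1:ℝ) ≤ ((1 + τ) + (η^2*τ + β + 1) + (η^2 + β + 1) + 1) / τ := by
      rw [le_div_iff₀ hτ]; nlinarith
    linarith
  have hM1 : 1 ≤ M := by linarith
  have hM0 : 0 < M := by linarith
  obtain ⟨K, hKdef⟩ : ∃ x, x = M^3 + (β+1)*M^2 + (η^2+β+1)*M + 1 := ⟨_, rfl⟩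
  have hK0 : 0 < K := by rw [hKdef]; positivity
  obtain ⟨ρ, hρdef⟩ : ∃ x, x = s^3 / (144 * M^2) := ⟨_, rfl⟩
  have hρ0 : 0 < ρ := by rw [hρdef]; positivity
  have hss1 : s^2 ≤ 1 := by nlinarith [hs0, hs1]
  have hM2sq : 1 ≤ M^2 := by nlinarith [hM2]
  have hρs4 : ρ ≤ s / 4 := by
    rw [hρdef, div_le_div_iff₀ (by positivity) hs4]
    have h1 : s^3 * 4 = 4*s*s^2 := by ring
    have h2 : 4*s*s^2 ≤ 4*s*1 := by
      have := mul_le_mul_of_nonneg_left hss1 (by linarith : (0:ℝ) ≤ 4*s)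
      linarith
    have h3 : (4:ℝ) ≤ 144*M^2 := by linarith [hM2sq]
    have h4 : s*4 ≤ s*(144*M^2) := mul_le_mul_of_nonneg_left h3 hs0.le
    linarith
  have hρA : 108 * M * ρ ≤ s^2 := by
    have heq : 108 * M * ρ = (108 * s^3) / (144 * M) := by
      rw [hρdef]; field_simp
    rw [heq, div_le_iff₀ (by positivity)]
    have h1 : 108 * s^3 = 108*s*s^2 := by ring
    have h2 : 108*s*s^2 ≤ 108*s*1 := by
      have := mul_le_mul_of_nonneg_left hss1 (by linarith : (0:ℝ) ≤ 108*s)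
      linarith
    have h3 : s^2*108 ≤ s^2*(144*M) := by
      have : (108:ℝ) ≤ 144*M := by linarith
      exact mul_le_mul_of_nonneg_left this (sq_nonneg s)
    nlinarith [sq_nonneg s, hs0.le]
  -- gamma constants
  obtain ⟨e, hedef⟩ : ∃ x, x = Real.sqrt ((β + η ^ 2) ^ 2 - 4 * τ * η ^ 2) := ⟨_, rfl⟩
  have hdisc' : 0 < (β + η ^ 2) ^ 2 - 4 * τ * η ^ 2 := by linarith
  have he2 : e ^ 2 = (β + η ^ 2) ^ 2 - 4 * τ * η ^ 2 := by
    rw [hedef]; exact Real.sq_sqrt hdisc'.le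
  have he0 : 0 < e := by rw [hedef]; exact Real.sqrt_pos.mpr hdisc'
  have heA : e < β + η ^ 2 := by
    have h4 : 0 < 4*τ*η^2 := by positivity
    have h5 : e^2 < (β+η^2)^2 := by linarith [he2]
    exact lt_of_pow_lt_pow_left₀ 2 (by positivity) h5
  obtain ⟨γ₁, hγ₁def⟩ : ∃ x, x = ((β + η ^ 2) - e) / (2 * τ * η ^ 2) := ⟨_, rfl⟩
  obtain ⟨γ₂, hγ₂def⟩ : ∃ x, x = ((β + η ^ 2) + e) / (2 * τ * η ^ 2) := ⟨_, rfl⟩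
  have hγ₁0 : 0 < γ₁ := by rw [hγ₁def]; apply div_pos (by linarith) (by positivity)
  have hγ₂0 : 0 < γ₂ := by rw [hγ₂def]; apply div_pos (by linarith) (by positivity)
  have hγle : γ₁ ≤ γ₂ := by
    rw [hγ₁def, hγ₂def]
    apply div_le_div_of_nonneg_right ?_ (by positivity)
    · linarith
  have hmul1 : τ*η^2*((β+η^2-e))^2 - (β+η^2)*(β+η^2-e)*(2*τ*η^2) + (2*τ*η^2)^2 = 0 := by
    linear_combination (τ*η^2) * he2
  have hmul2 : τ*η^2*((β+η^2+e))^2 - (β+η^2)*(β+η^2+e)*(2*τ*η^2) + (2*τ*η^2)^2 = 0 := by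
    linear_combination (τ*η^2) * he2
  have hq1 : τ * η^2 * γ₁^2 - (β + η^2) * γ₁ + 1 = 0 := by
    rw [hγ₁def]; field_simp; apply mul_left_cancel₀ (by positivity : τ*η^2 ≠ 0); linear_combination hmul1
  have hq2 : τ * η^2 * γ₂^2 - (β + η^2) * γ₂ + 1 = 0 := by
    rw [hγ₂def]; field_simp; apply mul_left_cancel₀ (by positivity : τ*η^2 ≠ 0); linear_combination hmul2
  -- final constants
  obtain ⟨L₁, hL₁def⟩ : ∃ x, x = τ*γ₁^3+(β+1)*γ₁^2+γ₁+τ*γ₁^4+γ₁^3 := ⟨_, rfl⟩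
  obtain ⟨L₂, hL₂def⟩ : ∃ x, x = τ*γ₂^3+(β+1)*γ₂^2+γ₂+τ*γ₂^4+γ₂^3 := ⟨_, rfl⟩
  have hL₁0 : 0 < L₁ := by rw [hL₁def]; positivity
  have hL₂0 : 0 < L₂ := by rw [hL₂def]; positivity
  obtain ⟨Cb, hCbdef⟩ : ∃ x, x = 64*K/(27*τ*s^3) := ⟨_, rfl⟩
  obtain ⟨C01, hC01def⟩ : ∃ x, x = 4*L₁/(τ*s^2) := ⟨_, rfl⟩
  obtain ⟨C02, hC02def⟩ : ∃ x, x = 4*L₂/(τ*s^2) := ⟨_, rfl⟩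
  have hCb0 : 0 < Cb := by rw [hCbdef]; positivity
  have hC010 : 0 < C01 := by rw [hC01def]; positivity
  have hC020 : 0 < C02 := by rw [hC02def]; positivity
  obtain ⟨C, hCdef⟩ : ∃ x, x = Cb + C01 + C02 + 2 := ⟨_, rfl⟩
  have hC0 : 0 < C := by rw [hCdef]; positivity
  obtain ⟨δ, hδdef⟩ : ∃ x, x = min 1 (min (τ*ρ^4/K) (min (τ*ρ^2*s^2/(4*K))
      (min (τ*ρ*s^3/(8*K)) (min (τ*ρ*s/(8*K)) (ρ/γ₂))))) := ⟨_, rfl⟩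
  have hδ0 : 0 < δ := by
    rw [hδdef]
    refine lt_min one_pos (lt_min (by positivity) (lt_min (by positivity)
      (lt_min (by positivity) (lt_min (by positivity) (by positivity)))))
  have hδ1 : δ ≤ 1 := by rw [hδdef]; exact min_le_left _ _
  have hδ2 : δ ≤ τ*ρ^4/K := by
    rw [hδdef]; exact le_trans (min_le_right _ _) (min_le_left _ _)
  have hδ3 : δ ≤ τ*ρ^2*s^2/(4*K) := by
    rw [hδdef]
    exact le_trans (min_le_right _ _) (le_trans (min_le_right _ _) (min_le_left _ _))
  have hδ4 : δ ≤ τ*ρ*s^3/(8*K) := by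
    rw [hδdef]
    exact le_trans (min_le_right _ _) (le_trans (min_le_right _ _)
      (le_trans (min_le_right _ _) (min_le_left _ _)))
  have hδ5 : δ ≤ τ*ρ*s/(8*K) := by
    rw [hδdef]
    exact le_trans (min_le_right _ _) (le_trans (min_le_right _ _)
      (le_trans (min_le_right _ _) (le_trans (min_le_right _ _) (min_le_left _ _))))
  have hδ6 : δ ≤ ρ/γ₂ := by
    rw [hδdef]
    exact le_trans (min_le_right _ _) (le_trans (min_le_right _ _)
      (le_trans (min_le_right _ _) (le_trans (min_le_right _ _) (min_le_right _ _))))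
  refine ⟨δ, hδ0, C, hC0, ?_⟩
  intro ν hν
  have hn0 : (0:ℝ) ≤ ‖ν‖ := norm_nonneg ν
  have hn1 : ‖ν‖ ≤ 1 := le_trans hν hδ1
  have hτC : (τ:ℂ) ≠ 0 := by
    simpa using ne_of_gt hτ
  have hn2le : ‖ν‖^2 ≤ 1 := pow_le_one₀ hn0 hn1
  have hn4le : ‖ν‖^4 ≤ 1 := pow_le_one₀ hn0 hn1
  have hτn : ‖(τ:ℂ)‖ = τ := by
    simp [abs_of_pos hτ]
  have hν2 : ‖ν^2‖ = ‖ν‖^2 := by rw [norm_pow]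
  have hν4 : ‖ν^4‖ = ‖ν‖^4 := by rw [norm_pow]
  obtain ⟨z₁, z₂, z₃, z₄, hfac⟩ := quartic_factor (τ:ℂ) (ν^2 - (τ:ℂ))
    ((η:ℂ)^2*(τ:ℂ) - ((β:ℂ)+1)*ν^2) (((η:ℂ)^2+(β:ℂ)-ν^2)*ν^2) (ν^4) hτC
  obtain ⟨Qf, hQfdef⟩ : ∃ F : ℂ → ℂ, F = fun x => (τ:ℂ)*x^4 + (ν^2 - (τ:ℂ))*x^3
      + ((η:ℂ)^2*(τ:ℂ) - ((β:ℂ)+1)*ν^2)*x^2 + (((η:ℂ)^2+(β:ℂ)-ν^2)*ν^2)*x + ν^4 := ⟨_, rfl⟩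
  have hQf : ∀ x : ℂ, Qf x = (τ:ℂ)*x^4 + (ν^2 - (τ:ℂ))*x^3
      + ((η:ℂ)^2*(τ:ℂ) - ((β:ℂ)+1)*ν^2)*x^2 + (((η:ℂ)^2+(β:ℂ)-ν^2)*ν^2)*x + ν^4 := by
    intro x; rw [hQfdef]
  have hfacQ : ∀ x : ℂ, Qf x = (τ:ℂ)*(x - z₁)*(x - z₂)*(x - z₃)*(x - z₄) := by
    intro x; rw [hQf x, hfac x]
  have hr1 : Qf z₁ = 0 := by rw [hfacQ]; ring
  have hr2 : Qf z₂ = 0 := by rw [hfacQ]; ring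
  have hr3 : Qf z₃ = 0 := by rw [hfacQ]; ring
  have hr4 : Qf z₄ = 0 := by rw [hfacQ]; ring
  have hprodG : ∀ w₁ w₂ w₃ w₄ x : ℂ,
      Qf x = (τ:ℂ)*(x - w₁)*(x - w₂)*(x - w₃)*(x - w₄) →
      ‖Qf x‖ = τ*(‖x - w₁‖*‖x - w₂‖*‖x - w₃‖*‖x - w₄‖) := by
    intro w₁ w₂ w₃ w₄ x h
    rw [h, norm_mul, norm_mul, norm_mul, norm_mul, hτn]; ring
  -- coefficient norm bounds
  have hcast : ∀ r : ℝ, 0 ≤ r → ‖((r:ℝ):ℂ)‖ = r := by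
    intro r hr; simp [abs_of_nonneg hr]
  have hc1 : ‖ν^2 - (τ:ℂ)‖ ≤ 1 + τ := by
    calc ‖ν^2 - (τ:ℂ)‖ ≤ ‖ν^2‖ + ‖(τ:ℂ)‖ := norm_sub_le _ _
    _ ≤ 1 + τ := by rw [hν2, hτn]; linarith only [hn2le]
  have hc2 : ‖(η:ℂ)^2*(τ:ℂ) - ((β:ℂ)+1)*ν^2‖ ≤ η^2*τ + β + 1 := by
    have e1 : ‖(η:ℂ)^2*(τ:ℂ)‖ = η^2*τ := by
      rw [show (η:ℂ)^2*(τ:ℂ) = ((η^2*τ : ℝ):ℂ) by push_cast; ring]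
      exact hcast _ (by positivity)
    have e2 : ‖((β:ℂ)+1)‖ = β+1 := by
      rw [show ((β:ℂ)+1) = ((β+1 : ℝ):ℂ) by push_cast; ring]
      exact hcast _ (by positivity)
    calc ‖(η:ℂ)^2*(τ:ℂ) - ((β:ℂ)+1)*ν^2‖ ≤ ‖(η:ℂ)^2*(τ:ℂ)‖ + ‖((β:ℂ)+1)*ν^2‖ :=
          norm_sub_le _ _
    _ = η^2*τ + (β+1)*‖ν‖^2 := by rw [e1, norm_mul, e2, hν2]
    _ ≤ η^2*τ + β + 1 := by
        linarith only [mul_le_of_le_one_right (by positivity : (0:ℝ) ≤ β+1) hn2le]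
  have hc3' : ‖(η:ℂ)^2+(β:ℂ)-ν^2‖ ≤ η^2 + β + 1 := by
    have e1 : ‖(η:ℂ)^2+(β:ℂ)‖ = η^2+β := by
      rw [show (η:ℂ)^2+(β:ℂ) = ((η^2+β : ℝ):ℂ) by push_cast; ring]
      exact hcast _ (by positivity)
    calc ‖(η:ℂ)^2+(β:ℂ)-ν^2‖ ≤ ‖(η:ℂ)^2+(β:ℂ)‖ + ‖ν^2‖ := norm_sub_le _ _
    _ ≤ η^2 + β + 1 := by rw [e1, hν2]; linarith only [hn2le]
  have hc3 : ‖((η:ℂ)^2+(β:ℂ)-ν^2)*ν^2‖ ≤ η^2 + β + 1 := by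
    rw [norm_mul, hν2]
    calc ‖(η:ℂ)^2+(β:ℂ)-ν^2‖ * ‖ν‖^2 ≤ (η^2+β+1) * 1 := by
          apply mul_le_mul hc3' hn2le (by positivity) (by positivity)
    _ = η^2+β+1 := mul_one _
  have hc0 : ‖ν^4‖ ≤ 1 := by rw [hν4]; exact hn4le
  -- root bound
  have hMb : ∀ z : ℂ, Qf z = 0 → ‖z‖ ≤ M := by
    intro z hz
    rcases le_or_gt ‖z‖ 1 with h1 | h1
    · linarith only [h1, hM1]
    have key : (τ:ℂ)*z^4 = -((ν^2-(τ:ℂ))*z^3 + ((η:ℂ)^2*(τ:ℂ)-((β:ℂ)+1)*ν^2)*z^2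
        + (((η:ℂ)^2+(β:ℂ)-ν^2)*ν^2)*z + ν^4) := by
      rw [hQf z] at hz; linear_combination hz
    have hnorm : τ*‖z‖^4 ≤ Sc*‖z‖^3 := by
      have h2 := congrArg norm key
      rw [norm_neg, norm_mul, hτn, norm_pow] at h2
      have h3 := norm_cubic_bound _ _ _ _ _ _ _ _ z hc1 hc2 hc3 hc0 h1.le
      rw [hScdef]
      calc τ*‖z‖^4 = ‖(ν^2-(τ:ℂ))*z^3 + ((η:ℂ)^2*(τ:ℂ)-((β:ℂ)+1)*ν^2)*z^2
          + (((η:ℂ)^2+(β:ℂ)-ν^2)*ν^2)*z + ν^4‖ := h2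
      _ ≤ ((1+τ)+(η^2*τ+β+1)+(η^2+β+1)+1) * ‖z‖^3 := h3
      _ = (1 + τ + (η^2*τ + β + 1) + (η^2 + β + 1) + 1)*‖z‖^3 := by ring
    have hz3 : (0:ℝ) < ‖z‖^3 := by positivity
    have h4 : τ*‖z‖ ≤ Sc := by
      have h5 : (τ*‖z‖)*‖z‖^3 ≤ Sc*‖z‖^3 := by
        calc (τ*‖z‖)*‖z‖^3 = τ*‖z‖^4 := by ring
        _ ≤ Sc*‖z‖^3 := hnorm
      exact le_of_mul_le_mul_right h5 hz3
    have h6 : ‖z‖ ≤ Sc/τ := by rw [le_div_iff₀ hτ, mul_comm]; exact h4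
    rw [hMdef]; linarith only [h6]
  -- the ν²-perturbation bound
  have hsumC : ((rm:ℝ):ℂ) + ((rp:ℝ):ℂ) = 1 := by exact_mod_cast hsum
  have hprodC : ((rm:ℝ):ℂ) * ((rp:ℝ):ℂ) = ((η:ℝ):ℂ)^2 := by exact_mod_cast hprod
  have hdiff : ∀ x : ℂ, ‖x‖ ≤ M →
      ‖Qf x - (τ:ℂ)*x^2*(x - (rm:ℂ))*(x - (rp:ℂ))‖ ≤ K*‖ν‖^2 := by
    intro x hx
    have hid : Qf x - (τ:ℂ)*x^2*(x-(rm:ℂ))*(x-(rp:ℂ))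
        = ν^2 * ((1:ℂ)*x^3 + (-((β:ℂ)+1))*x^2 + ((η:ℂ)^2+(β:ℂ)-ν^2)*x + ν^2) := by
      rw [hQf x]
      linear_combination ((τ:ℂ)*x^3)*hsumC + (-(τ:ℂ)*x^2)*hprodC
    rw [hid, norm_mul, hν2]
    have hb := norm_cubic_boundM (1:ℂ) (-((β:ℂ)+1)) ((η:ℂ)^2+(β:ℂ)-ν^2) (ν^2)
      1 (β+1) (η^2+β+1) 1 M x (by simp) (by
        rw [norm_neg, show ((β:ℂ)+1) = ((β+1 : ℝ):ℂ) by push_cast; ring]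
        rw [hcast _ (by positivity)]) hc3' (by rw [hν2]; exact hn2le) hx
    calc ‖ν‖^2 * ‖(1:ℂ)*x^3 + (-((β:ℂ)+1))*x^2 + ((η:ℂ)^2+(β:ℂ)-ν^2)*x + ν^2‖
        ≤ ‖ν‖^2 * (1*M^3 + (β+1)*M^2 + (η^2+β+1)*M + 1) := by
          exact mul_le_mul_of_nonneg_left hb (by positivity)
      _ = K*‖ν‖^2 := by rw [hKdef]; ring
  have hn2δ : ‖ν‖^2 ≤ δ := by
    calc ‖ν‖^2 = ‖ν‖*‖ν‖ := sq ‖ν‖ ▸ rfl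
    _ ≤ δ*1 := mul_le_mul hν hn1 hn0 hδ0.le
    _ = δ := mul_one δ
  have hKn2 : K*‖ν‖^2 ≤ K*δ := mul_le_mul_of_nonneg_left hn2δ hK0.le
  -- coarse localization
  have hcl : ∀ z : ℂ, Qf z = 0 →
      (‖z‖ ≤ ρ ∨ ‖z - (rm:ℂ)‖ ≤ ρ ∨ ‖z - (rp:ℂ)‖ ≤ ρ) := by
    intro z hz
    by_contra hcon
    push_neg at hcon
    obtain ⟨ha, hb, hc⟩ := hcon
    have h1 := hdiff z (hMb z hz)
    rw [hz, zero_sub, norm_neg] at h1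
    have h2 : τ*(‖z‖^2*‖z-(rm:ℂ)‖*‖z-(rp:ℂ)‖) ≤ K*‖ν‖^2 := by
      calc τ*(‖z‖^2*‖z-(rm:ℂ)‖*‖z-(rp:ℂ)‖)
          = ‖(τ:ℂ)*z^2*(z-(rm:ℂ))*(z-(rp:ℂ))‖ := by
            rw [norm_mul, norm_mul, norm_mul, hτn, norm_pow]; ring
      _ ≤ K*‖ν‖^2 := h1
    have e1 : ρ^2 < ‖z‖^2 := by
      apply pow_lt_pow_left₀ ha hρ0.le
      norm_num
    have e1' : (0:ℝ) < ‖z‖^2 := lt_of_le_of_lt (by positivity) e1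
    have e2 : ρ^2*ρ < ‖z‖^2*‖z-(rm:ℂ)‖ := mul_lt_mul' e1.le hb hρ0.le e1'
    have e2' : (0:ℝ) < ‖z‖^2*‖z-(rm:ℂ)‖ := lt_of_le_of_lt (by positivity) e2
    have e3 : ρ^2*ρ*ρ < ‖z‖^2*‖z-(rm:ℂ)‖*‖z-(rp:ℂ)‖ := mul_lt_mul' e2.le hc hρ0.le e2'
    have e4 : τ*(ρ^2*ρ*ρ) < τ*(‖z‖^2*‖z-(rm:ℂ)‖*‖z-(rp:ℂ)‖) :=
      mul_lt_mul_of_pos_left e3 hτ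
    have e5 : K*δ ≤ τ*ρ^4 := by
      have := mul_le_mul_of_nonneg_left hδ2 hK0.le
      calc K*δ ≤ K*(τ*ρ^4/K) := this
      _ = τ*ρ^4 := by field_simp
    have : τ*(ρ^2*ρ*ρ) = τ*ρ^4 := by ring
    linarith only [e4, h2, hKn2, e5, this]
  have hcastabs : ∀ r : ℝ, ‖((r:ℝ):ℂ)‖ = |r| := by
    intro r; simp
  have hlow : ∀ x : ℂ, ‖x‖ ≤ M →
      ‖(τ:ℂ)*x^2*(x-(rm:ℂ))*(x-(rp:ℂ))‖ - K*‖ν‖^2 ≤ ‖Qf x‖ := by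
    intro x hx
    have h := hdiff x hx
    have h2 : ‖(τ:ℂ)*x^2*(x-(rm:ℂ))*(x-(rp:ℂ))‖
        ≤ ‖Qf x‖ + ‖Qf x - (τ:ℂ)*x^2*(x-(rm:ℂ))*(x-(rp:ℂ))‖ := by
      calc ‖(τ:ℂ)*x^2*(x-(rm:ℂ))*(x-(rp:ℂ))‖
          = ‖Qf x - (Qf x - (τ:ℂ)*x^2*(x-(rm:ℂ))*(x-(rp:ℂ)))‖ := by
            rw [sub_sub_cancel]
        _ ≤ ‖Qf x‖ + ‖Qf x - (τ:ℂ)*x^2*(x-(rm:ℂ))*(x-(rp:ℂ))‖ := norm_sub_le _ _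
    linarith only [h, h2]
  have hKδ3 : K*δ ≤ τ*ρ^2*s^2/4 := by
    have := mul_le_mul_of_nonneg_left hδ3 hK0.le
    calc K*δ ≤ K*(τ*ρ^2*s^2/(4*K)) := this
    _ = τ*ρ^2*s^2/4 := by field_simp
  have hKδ4 : K*δ ≤ τ*ρ*s^3/8 := by
    have := mul_le_mul_of_nonneg_left hδ4 hK0.le
    calc K*δ ≤ K*(τ*ρ*s^3/(8*K)) := this
    _ = τ*ρ*s^3/8 := by field_simp
  have hKδ5 : K*δ ≤ τ*ρ*s/8 := by
    have := mul_le_mul_of_nonneg_left hδ5 hK0.le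
    calc K*δ ≤ K*(τ*ρ*s/(8*K)) := this
    _ = τ*ρ*s/8 := by field_simp
  have h36 : 36*(M^2)*ρ = s^3/4 := by rw [hρdef]; field_simp; ring
  -- at most two roots near 0
  have hA2 : ∀ w₁ w₂ w₃ w₄ : ℂ,
      (∀ x : ℂ, Qf x = (τ:ℂ)*(x - w₁)*(x - w₂)*(x - w₃)*(x - w₄)) →
      ‖w₁‖ ≤ ρ → ‖w₂‖ ≤ ρ → ‖w₃‖ ≤ ρ → ‖w₄‖ ≤ M → False := by
    intro w₁ w₂ w₃ w₄ hf h1 h2 h3 h4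
    have hx2ρ : (0:ℝ) ≤ 2*ρ := by positivity
    have hxn : ‖((2*ρ:ℝ):ℂ)‖ = 2*ρ := by rw [hcastabs, abs_of_nonneg hx2ρ]
    have h2ρs : 2*ρ ≤ s/2 := by linarith only [hρs4]
    have hxM : ‖((2*ρ:ℝ):ℂ)‖ ≤ M := by rw [hxn]; linarith only [h2ρs, hs1, hM1]
    -- upper bound
    have hub : ‖Qf ((2*ρ:ℝ):ℂ)‖ ≤ τ*(3*ρ*(3*ρ)*(3*ρ)*(2*M)) := by
      rw [hprodG w₁ w₂ w₃ w₄ _ (hf _)]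
      have e1 : ‖((2*ρ:ℝ):ℂ) - w₁‖ ≤ 3*ρ := by
        calc ‖((2*ρ:ℝ):ℂ) - w₁‖ ≤ ‖((2*ρ:ℝ):ℂ)‖ + ‖w₁‖ := norm_sub_le _ _
        _ ≤ 3*ρ := by rw [hxn]; linarith only [h1]
      have e2 : ‖((2*ρ:ℝ):ℂ) - w₂‖ ≤ 3*ρ := by
        calc ‖((2*ρ:ℝ):ℂ) - w₂‖ ≤ ‖((2*ρ:ℝ):ℂ)‖ + ‖w₂‖ := norm_sub_le _ _
        _ ≤ 3*ρ := by rw [hxn]; linarith only [h2]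
      have e3 : ‖((2*ρ:ℝ):ℂ) - w₃‖ ≤ 3*ρ := by
        calc ‖((2*ρ:ℝ):ℂ) - w₃‖ ≤ ‖((2*ρ:ℝ):ℂ)‖ + ‖w₃‖ := norm_sub_le _ _
        _ ≤ 3*ρ := by rw [hxn]; linarith only [h3]
      have e4 : ‖((2*ρ:ℝ):ℂ) - w₄‖ ≤ 2*M := by
        calc ‖((2*ρ:ℝ):ℂ) - w₄‖ ≤ ‖((2*ρ:ℝ):ℂ)‖ + ‖w₄‖ := norm_sub_le _ _
        _ ≤ 2*M := by rw [hxn]; linarith only [h4, h2ρs, hs1, hM1]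
      gcongr
    -- lower bound
    have hPr : (τ:ℂ)*((2*ρ:ℝ):ℂ)^2*(((2*ρ:ℝ):ℂ)-(rm:ℂ))*(((2*ρ:ℝ):ℂ)-(rp:ℂ))
        = (((τ*(2*ρ)^2*(rm-2*ρ)*(rp-2*ρ)) : ℝ):ℂ) := by push_cast; ring
    have hrmlow : s/2 ≤ rm - 2*ρ := by linarith only [h2ρs, hsrm]
    have hrplow : s/2 ≤ rp - 2*ρ := by linarith only [h2ρs, hs1, hrph]
    have hPval : τ*ρ^2*s^2 ≤ ‖(τ:ℂ)*((2*ρ:ℝ):ℂ)^2*(((2*ρ:ℝ):ℂ)-(rm:ℂ))*(((2*ρ:ℝ):ℂ)-(rp:ℂ))‖ := by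
      rw [hPr, hcastabs]
      have t0 : (0:ℝ) ≤ τ*(2*ρ)^2 := by positivity
      have t1 : τ*(2*ρ)^2*(s/2) ≤ τ*(2*ρ)^2*(rm-2*ρ) := mul_le_mul_of_nonneg_left hrmlow t0
      have t2 : τ*(2*ρ)^2*(s/2)*(s/2) ≤ τ*(2*ρ)^2*(rm-2*ρ)*(rp-2*ρ) :=
        mul_le_mul t1 hrplow (by positivity) (le_trans (by positivity) t1)
      have hrval : τ*ρ^2*s^2 ≤ τ*(2*ρ)^2*(rm-2*ρ)*(rp-2*ρ) := by
        calc τ*ρ^2*s^2 = τ*(2*ρ)^2*(s/2)*(s/2) := by ring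
        _ ≤ τ*(2*ρ)^2*(rm-2*ρ)*(rp-2*ρ) := t2
      exact le_trans hrval (le_abs_self _)
    have hlb := hlow ((2*ρ:ℝ):ℂ) hxM
    -- combine
    have hup2 : τ*(3*ρ*(3*ρ)*(3*ρ)*(2*M)) ≤ τ*ρ^2*s^2/2 := by
      have e1 : τ*(3*ρ*(3*ρ)*(3*ρ)*(2*M)) = (108*M*ρ)*(τ*ρ^2)/2 := by ring
      have e2 : (108*M*ρ)*(τ*ρ^2)/2 ≤ (s^2)*(τ*ρ^2)/2 := by
        apply div_le_div_of_nonneg_right ?_ (by norm_num)  -- careful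
        exact mul_le_mul_of_nonneg_right hρA (by positivity)
      calc τ*(3*ρ*(3*ρ)*(3*ρ)*(2*M)) = (108*M*ρ)*(τ*ρ^2)/2 := e1
      _ ≤ (s^2)*(τ*ρ^2)/2 := e2
      _ = τ*ρ^2*s^2/2 := by ring
    have hpos : 0 < τ*ρ^2*s^2 := by positivity
    linarith only [hub, hPval, hlb, hup2, hKn2, hKδ3, hpos]
  -- at most one root near rm
  have hBm : ∀ w₁ w₂ w₃ w₄ : ℂ,
      (∀ x : ℂ, Qf x = (τ:ℂ)*(x - w₁)*(x - w₂)*(x - w₃)*(x - w₄)) →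
      ‖w₁ - (rm:ℂ)‖ ≤ ρ → ‖w₂ - (rm:ℂ)‖ ≤ ρ → ‖w₃‖ ≤ M → ‖w₄‖ ≤ M → False := by
    intro w₁ w₂ w₃ w₄ hf h1 h2 h3 h4
    have h2ρs : 2*ρ ≤ s/2 := by linarith only [hρs4]
    have hxr0 : (0:ℝ) ≤ rm - 2*ρ := by linarith only [h2ρs, hsrm, hs0]
    have hxn : ‖((rm - 2*ρ:ℝ):ℂ)‖ = rm - 2*ρ := by rw [hcastabs, abs_of_nonneg hxr0]
    have hxM : ‖((rm - 2*ρ:ℝ):ℂ)‖ ≤ M := by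
      rw [hxn]; linarith only [hrmh, hM1, hρ0]
    have hxrm : ‖((rm - 2*ρ:ℝ):ℂ) - (rm:ℂ)‖ = 2*ρ := by
      rw [show ((rm - 2*ρ:ℝ):ℂ) - (rm:ℂ) = ((-(2*ρ):ℝ):ℂ) by push_cast; ring, hcastabs]
      rw [abs_neg, abs_of_nonneg (by positivity)]
    have hub : ‖Qf ((rm - 2*ρ:ℝ):ℂ)‖ ≤ τ*(3*ρ*(3*ρ)*(2*M)*(2*M)) := by
      rw [hprodG w₁ w₂ w₃ w₄ _ (hf _)]
      have e1 : ‖((rm - 2*ρ:ℝ):ℂ) - w₁‖ ≤ 3*ρ := by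
        calc ‖((rm - 2*ρ:ℝ):ℂ) - w₁‖
            = ‖(((rm - 2*ρ:ℝ):ℂ) - (rm:ℂ)) + ((rm:ℂ) - w₁)‖ := by ring_nf
        _ ≤ ‖((rm - 2*ρ:ℝ):ℂ) - (rm:ℂ)‖ + ‖(rm:ℂ) - w₁‖ := norm_add_le _ _
        _ ≤ 3*ρ := by rw [hxrm, norm_sub_rev]; linarith only [h1]
      have e2 : ‖((rm - 2*ρ:ℝ):ℂ) - w₂‖ ≤ 3*ρ := by
        calc ‖((rm - 2*ρ:ℝ):ℂ) - w₂‖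
            = ‖(((rm - 2*ρ:ℝ):ℂ) - (rm:ℂ)) + ((rm:ℂ) - w₂)‖ := by ring_nf
        _ ≤ ‖((rm - 2*ρ:ℝ):ℂ) - (rm:ℂ)‖ + ‖(rm:ℂ) - w₂‖ := norm_add_le _ _
        _ ≤ 3*ρ := by rw [hxrm, norm_sub_rev]; linarith only [h2]
      have e3 : ‖((rm - 2*ρ:ℝ):ℂ) - w₃‖ ≤ 2*M := by
        calc ‖((rm - 2*ρ:ℝ):ℂ) - w₃‖ ≤ ‖((rm - 2*ρ:ℝ):ℂ)‖ + ‖w₃‖ := norm_sub_le _ _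
        _ ≤ 2*M := by rw [hxn]; linarith only [h3, hrmh, hM1, hρ0]
      have e4 : ‖((rm - 2*ρ:ℝ):ℂ) - w₄‖ ≤ 2*M := by
        calc ‖((rm - 2*ρ:ℝ):ℂ) - w₄‖ ≤ ‖((rm - 2*ρ:ℝ):ℂ)‖ + ‖w₄‖ := norm_sub_le _ _
        _ ≤ 2*M := by rw [hxn]; linarith only [h4, hrmh, hM1, hρ0]
      gcongr
    have hPr : (τ:ℂ)*((rm - 2*ρ:ℝ):ℂ)^2*(((rm - 2*ρ:ℝ):ℂ)-(rm:ℂ))*(((rm - 2*ρ:ℝ):ℂ)-(rp:ℂ))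
        = (((τ*(rm-2*ρ)^2*(2*ρ)*(rp-rm+2*ρ)) : ℝ):ℂ) := by push_cast; ring
    have hrmlow : s/2 ≤ rm - 2*ρ := by linarith only [h2ρs, hsrm]
    have hglow : s ≤ rp - rm + 2*ρ := by
      have : rp - rm = g := by rw [hrmdef, hrpdef]; ring
      linarith only [this, hsg, hρ0]
    have hPval : τ*ρ*s^3/2 ≤ ‖(τ:ℂ)*((rm - 2*ρ:ℝ):ℂ)^2*(((rm - 2*ρ:ℝ):ℂ)-(rm:ℂ))*(((rm - 2*ρ:ℝ):ℂ)-(rp:ℂ))‖ := by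
      rw [hPr, hcastabs]
      have t1 : (s/2)*(s/2) ≤ (rm-2*ρ)*(rm-2*ρ) :=
        mul_le_mul hrmlow hrmlow (by positivity) (le_trans (by positivity) hrmlow)
      have t2 : τ*((s/2)*(s/2))*(2*ρ) ≤ τ*((rm-2*ρ)*(rm-2*ρ))*(2*ρ) := by
        apply mul_le_mul_of_nonneg_right ?_ (by positivity)
        exact mul_le_mul_of_nonneg_left t1 hτ.le
      have t3 : τ*((s/2)*(s/2))*(2*ρ)*s ≤ τ*((rm-2*ρ)*(rm-2*ρ))*(2*ρ)*(rp-rm+2*ρ) :=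
        mul_le_mul t2 hglow hs0.le (le_trans (by positivity) t2)
      have hrval : τ*ρ*s^3/2 ≤ τ*(rm-2*ρ)^2*(2*ρ)*(rp-rm+2*ρ) := by
        calc τ*ρ*s^3/2 = τ*((s/2)*(s/2))*(2*ρ)*s := by ring
        _ ≤ τ*((rm-2*ρ)*(rm-2*ρ))*(2*ρ)*(rp-rm+2*ρ) := t3
        _ = τ*(rm-2*ρ)^2*(2*ρ)*(rp-rm+2*ρ) := by ring
      exact le_trans hrval (le_abs_self _)
    have hlb := hlow ((rm - 2*ρ:ℝ):ℂ) hxM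
    have hup2 : τ*(3*ρ*(3*ρ)*(2*M)*(2*M)) = τ*ρ*s^3/4 := by
      calc τ*(3*ρ*(3*ρ)*(2*M)*(2*M)) = (36*(M^2)*ρ)*(τ*ρ) := by ring
      _ = (s^3/4)*(τ*ρ) := by rw [h36]
      _ = τ*ρ*s^3/4 := by ring
    have hpos : 0 < τ*ρ*s^3 := by positivity
    linarith only [hub, hPval, hlb, hup2, hKn2, hKδ4, hpos]
  -- at most one root near rp
  have hBp : ∀ w₁ w₂ w₃ w₄ : ℂ,
      (∀ x : ℂ, Qf x = (τ:ℂ)*(x - w₁)*(x - w₂)*(x - w₃)*(x - w₄)) →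
      ‖w₁ - (rp:ℂ)‖ ≤ ρ → ‖w₂ - (rp:ℂ)‖ ≤ ρ → ‖w₃‖ ≤ M → ‖w₄‖ ≤ M → False := by
    intro w₁ w₂ w₃ w₄ hf h1 h2 h3 h4
    have h2ρs : 2*ρ ≤ s/2 := by linarith only [hρs4]
    have hxr0 : (0:ℝ) ≤ rp + 2*ρ := by linarith only [hrph, hρ0]
    have hxn : ‖((rp + 2*ρ:ℝ):ℂ)‖ = rp + 2*ρ := by rw [hcastabs, abs_of_nonneg hxr0]
    have hxM : ‖((rp + 2*ρ:ℝ):ℂ)‖ ≤ M := by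
      rw [hxn]; linarith only [hrp1, hM2, h2ρs, hs1]
    have hxrp : ‖((rp + 2*ρ:ℝ):ℂ) - (rp:ℂ)‖ = 2*ρ := by
      rw [show ((rp + 2*ρ:ℝ):ℂ) - (rp:ℂ) = ((2*ρ:ℝ):ℂ) by push_cast; ring, hcastabs]
      rw [abs_of_nonneg (by positivity)]
    have hub : ‖Qf ((rp + 2*ρ:ℝ):ℂ)‖ ≤ τ*(3*ρ*(3*ρ)*(2*M)*(2*M)) := by
      rw [hprodG w₁ w₂ w₃ w₄ _ (hf _)]
      have e1 : ‖((rp + 2*ρ:ℝ):ℂ) - w₁‖ ≤ 3*ρ := by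
        calc ‖((rp + 2*ρ:ℝ):ℂ) - w₁‖
            = ‖(((rp + 2*ρ:ℝ):ℂ) - (rp:ℂ)) + ((rp:ℂ) - w₁)‖ := by ring_nf
        _ ≤ ‖((rp + 2*ρ:ℝ):ℂ) - (rp:ℂ)‖ + ‖(rp:ℂ) - w₁‖ := norm_add_le _ _
        _ ≤ 3*ρ := by rw [hxrp, norm_sub_rev]; linarith only [h1]
      have e2 : ‖((rp + 2*ρ:ℝ):ℂ) - w₂‖ ≤ 3*ρ := by
        calc ‖((rp + 2*ρ:ℝ):ℂ) - w₂‖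
            = ‖(((rp + 2*ρ:ℝ):ℂ) - (rp:ℂ)) + ((rp:ℂ) - w₂)‖ := by ring_nf
        _ ≤ ‖((rp + 2*ρ:ℝ):ℂ) - (rp:ℂ)‖ + ‖(rp:ℂ) - w₂‖ := norm_add_le _ _
        _ ≤ 3*ρ := by rw [hxrp, norm_sub_rev]; linarith only [h2]
      have e3 : ‖((rp + 2*ρ:ℝ):ℂ) - w₃‖ ≤ 2*M := by
        calc ‖((rp + 2*ρ:ℝ):ℂ) - w₃‖ ≤ ‖((rp + 2*ρ:ℝ):ℂ)‖ + ‖w₃‖ := norm_sub_le _ _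
        _ ≤ 2*M := by rw [hxn]; linarith only [h3, hrp1, hM2, h2ρs, hs1]
      have e4 : ‖((rp + 2*ρ:ℝ):ℂ) - w₄‖ ≤ 2*M := by
        calc ‖((rp + 2*ρ:ℝ):ℂ) - w₄‖ ≤ ‖((rp + 2*ρ:ℝ):ℂ)‖ + ‖w₄‖ := norm_sub_le _ _
        _ ≤ 2*M := by rw [hxn]; linarith only [h4, hrp1, hM2, h2ρs, hs1]
      gcongr
    have hPr : (τ:ℂ)*((rp + 2*ρ:ℝ):ℂ)^2*(((rp + 2*ρ:ℝ):ℂ)-(rm:ℂ))*(((rp + 2*ρ:ℝ):ℂ)-(rp:ℂ))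
        = (((τ*(rp+2*ρ)^2*(rp+2*ρ-rm)*(2*ρ)) : ℝ):ℂ) := by push_cast; ring
    have hglow : s ≤ rp + 2*ρ - rm := by
      have : rp - rm = g := by rw [hrmdef, hrpdef]; ring
      linarith only [this, hsg, hρ0]
    have hPval : τ*ρ*s/2 ≤ ‖(τ:ℂ)*((rp + 2*ρ:ℝ):ℂ)^2*(((rp + 2*ρ:ℝ):ℂ)-(rm:ℂ))*(((rp + 2*ρ:ℝ):ℂ)-(rp:ℂ))‖ := by
      rw [hPr, hcastabs]
      have hhalf : (1:ℝ)/2 ≤ rp + 2*ρ := by linarith only [hrph, hρ0]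
      have t1 : ((1:ℝ)/2)*(1/2) ≤ (rp+2*ρ)*(rp+2*ρ) :=
        mul_le_mul hhalf hhalf (by norm_num) (le_trans (by norm_num) hhalf)
      have t2 : τ*(((1:ℝ)/2)*(1/2))*s ≤ τ*((rp+2*ρ)*(rp+2*ρ))*(rp+2*ρ-rm) := by
        apply mul_le_mul ?_ hglow hs0.le ?_
        · exact mul_le_mul_of_nonneg_left t1 hτ.le
        · have := mul_le_mul_of_nonneg_left t1 hτ.le
          exact le_trans (by positivity) this
      have t3 : τ*(((1:ℝ)/2)*(1/2))*s*(2*ρ) ≤ τ*((rp+2*ρ)*(rp+2*ρ))*(rp+2*ρ-rm)*(2*ρ) :=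
        mul_le_mul_of_nonneg_right t2 (by positivity)
      have hrval : τ*ρ*s/2 ≤ τ*(rp+2*ρ)^2*(rp+2*ρ-rm)*(2*ρ) := by
        calc τ*ρ*s/2 = τ*((1/2)*(1/2))*s*(2*ρ) := by ring
        _ ≤ τ*((rp+2*ρ)*(rp+2*ρ))*(rp+2*ρ-rm)*(2*ρ) := t3
        _ = τ*(rp+2*ρ)^2*(rp+2*ρ-rm)*(2*ρ) := by ring
      exact le_trans hrval (le_abs_self _)
    have hlb := hlow ((rp + 2*ρ:ℝ):ℂ) hxM
    have hup2 : τ*(3*ρ*(3*ρ)*(2*M)*(2*M)) = τ*ρ*s^3/4 := by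
      calc τ*(3*ρ*(3*ρ)*(2*M)*(2*M)) = (36*(M^2)*ρ)*(τ*ρ) := by ring
      _ = (s^3/4)*(τ*ρ) := by rw [h36]
      _ = τ*ρ*s^3/4 := by ring
    have hs3s : τ*ρ*s^3/4 ≤ τ*ρ*s/4 := by
      have : s^3 ≤ s := by
        have h9 := mul_le_mul_of_nonneg_left hss1 hs0.le
        calc s^3 = s*s^2 := by ring
        _ ≤ s*1 := h9
        _ = s := mul_one s
      have h2 := mul_le_mul_of_nonneg_left this (by positivity : (0:ℝ) ≤ τ*ρ)
      calc τ*ρ*s^3/4 = (τ*ρ*s^3)/4 := by ring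
      _ ≤ (τ*ρ*s)/4 := by linarith only [h2]
      _ = τ*ρ*s/4 := by ring
    have hpos : 0 < τ*ρ*s := by positivity
    linarith only [hub, hPval, hlb, hup2, hKn2, hKδ5, hpos, hs3s]
  have hrmn : ‖(rm:ℂ)‖ = rm := by rw [hcastabs, abs_of_nonneg hrm0.le]
  have hrpn : ‖(rp:ℂ)‖ = rp := by rw [hcastabs, abs_of_nonneg (by linarith only [hrph])]
  have hgn : ‖(rp:ℂ) - (rm:ℂ)‖ = g := by
    rw [show (rp:ℂ) - (rm:ℂ) = ((rp - rm : ℝ):ℂ) by push_cast; ring, hcastabs]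
    rw [show rp - rm = g by rw [hrmdef, hrpdef]; ring]
    exact abs_of_nonneg hg0.le
  have hrmM : ‖(rm:ℂ)‖ ≤ M := by rw [hrmn]; linarith only [hrmh, hM1]
  have hrpM : ‖(rp:ℂ)‖ ≤ M := by rw [hrpn]; linarith only [hrp1, hM1]
  -- roots close to rm-cluster
  have hclRm : ∀ z : ℂ, Qf z = 0 → ‖(rm:ℂ) - z‖ < 3*s/4 → ‖z - (rm:ℂ)‖ ≤ ρ := by
    intro z hz hlt
    rcases hcl z hz with h | h | h
    · exfalso
      have h1 : ‖(rm:ℂ)‖ - ‖z‖ ≤ ‖(rm:ℂ) - z‖ := norm_sub_norm_le _ _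
      rw [hrmn] at h1
      linarith only [h1, hlt, h, hsrm, hρs4]
    · exact h
    · exfalso
      have h3 : ‖(rp:ℂ) - (rm:ℂ)‖ ≤ ‖(rp:ℂ) - z‖ + ‖z - (rm:ℂ)‖ := by
        calc ‖(rp:ℂ) - (rm:ℂ)‖ = ‖((rp:ℂ) - z) + (z - (rm:ℂ))‖ := by rw [sub_add_sub_cancel]
        _ ≤ ‖(rp:ℂ) - z‖ + ‖z - (rm:ℂ)‖ := norm_add_le _ _
      rw [hgn, norm_sub_rev (rp:ℂ) z] at h3
      rw [norm_sub_rev] at hlt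
      linarith only [h3, hlt, h, hsg, hρs4]
  have hclRp : ∀ z : ℂ, Qf z = 0 → ‖(rp:ℂ) - z‖ < 3*s/4 → ‖z - (rp:ℂ)‖ ≤ ρ := by
    intro z hz hlt
    rcases hcl z hz with h | h | h
    · exfalso
      have h1 : ‖(rp:ℂ)‖ - ‖z‖ ≤ ‖(rp:ℂ) - z‖ := norm_sub_norm_le _ _
      rw [hrpn] at h1
      linarith only [h1, hlt, h, hsrm, hρs4, hrph, hs1]
    · exfalso
      have h3 : ‖(rp:ℂ) - (rm:ℂ)‖ ≤ ‖(rp:ℂ) - z‖ + ‖z - (rm:ℂ)‖ := by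
        calc ‖(rp:ℂ) - (rm:ℂ)‖ = ‖((rp:ℂ) - z) + (z - (rm:ℂ))‖ := by rw [sub_add_sub_cancel]
        _ ≤ ‖(rp:ℂ) - z‖ + ‖z - (rm:ℂ)‖ := norm_add_le _ _
      rw [hgn] at h3
      linarith only [h3, hlt, h, hsg, hρs4]
    · exact h
  -- evaluation bounds at rm, rp
  have hEvRm : ‖Qf (rm:ℂ)‖ ≤ K*‖ν‖^2 := by
    have h2 := hdiff (rm:ℂ) hrmM
    rw [show (τ:ℂ)*(rm:ℂ)^2*((rm:ℂ)-(rm:ℂ))*((rm:ℂ)-(rp:ℂ)) = 0 by ring, sub_zero] at h2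
    exact h2
  have hEvRp : ‖Qf (rp:ℂ)‖ ≤ K*‖ν‖^2 := by
    have h2 := hdiff (rp:ℂ) hrpM
    rw [show (τ:ℂ)*(rp:ℂ)^2*((rp:ℂ)-(rm:ℂ))*((rp:ℂ)-(rp:ℂ)) = 0 by ring, sub_zero] at h2
    exact h2
  have hDrm : ‖(rm:ℂ)-z₁‖*‖(rm:ℂ)-z₂‖*‖(rm:ℂ)-z₃‖*‖(rm:ℂ)-z₄‖ ≤ K*‖ν‖^2/τ := by
    have h3 := hprodG z₁ z₂ z₃ z₄ (rm:ℂ) (hfacQ _)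
    rw [h3] at hEvRm
    rw [le_div_iff₀ hτ, mul_comm]
    exact hEvRm
  have hDrp : ‖(rp:ℂ)-z₁‖*‖(rp:ℂ)-z₂‖*‖(rp:ℂ)-z₃‖*‖(rp:ℂ)-z₄‖ ≤ K*‖ν‖^2/τ := by
    have h3 := hprodG z₁ z₂ z₃ z₄ (rp:ℂ) (hfacQ _)
    rw [h3] at hEvRp
    rw [le_div_iff₀ hτ, mul_comm]
    exact hEvRp
  have hconvm : ∀ z : ℂ, ‖(rm:ℂ)-z‖*(3*s/4)^3 ≤ K*‖ν‖^2/τ → ‖z-(rm:ℂ)‖ ≤ Cb*‖ν‖^2 := by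
    intro z h
    rw [norm_sub_rev, hCbdef]
    have hpos : (0:ℝ) < (3*s/4)^3 := by positivity
    calc ‖(rm:ℂ)-z‖ ≤ (K*‖ν‖^2/τ)/((3*s/4)^3) := by rw [le_div_iff₀ hpos]; exact h
    _ = 64*K/(27*τ*s^3)*‖ν‖^2 := by field_simp; ring
  have hconvp : ∀ z : ℂ, ‖(rp:ℂ)-z‖*(3*s/4)^3 ≤ K*‖ν‖^2/τ → ‖z-(rp:ℂ)‖ ≤ Cb*‖ν‖^2 := by
    intro z h
    rw [norm_sub_rev, hCbdef]
    have hpos : (0:ℝ) < (3*s/4)^3 := by positivity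
    calc ‖(rp:ℂ)-z‖ ≤ (K*‖ν‖^2/τ)/((3*s/4)^3) := by rw [le_div_iff₀ hpos]; exact h
    _ = 64*K/(27*τ*s^3)*‖ν‖^2 := by field_simp; ring
  have hRm : ∃ zc : ℂ, Qf zc = 0 ∧ ‖zc - (rm:ℂ)‖ ≤ Cb*‖ν‖^2 := by
    have hpick := pick_one (‖(rm:ℂ)-z₁‖) (‖(rm:ℂ)-z₂‖) (‖(rm:ℂ)-z₃‖) (‖(rm:ℂ)-z₄‖)
      (3*s/4) (K*‖ν‖^2/τ) (norm_nonneg _) (norm_nonneg _) (norm_nonneg _) (norm_nonneg _)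
      (by positivity) hDrm
      (fun h => hBm z₁ z₂ z₃ z₄ (fun x => hfacQ x)
        (hclRm z₁ hr1 h.1) (hclRm z₂ hr2 h.2) (hMb z₃ hr3) (hMb z₄ hr4))
      (fun h => hBm z₁ z₃ z₂ z₄ (fun x => by rw [hfacQ x]; ring)
        (hclRm z₁ hr1 h.1) (hclRm z₃ hr3 h.2) (hMb z₂ hr2) (hMb z₄ hr4))
      (fun h => hBm z₁ z₄ z₂ z₃ (fun x => by rw [hfacQ x]; ring)
        (hclRm z₁ hr1 h.1) (hclRm z₄ hr4 h.2) (hMb z₂ hr2) (hMb z₃ hr3))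
      (fun h => hBm z₂ z₃ z₁ z₄ (fun x => by rw [hfacQ x]; ring)
        (hclRm z₂ hr2 h.1) (hclRm z₃ hr3 h.2) (hMb z₁ hr1) (hMb z₄ hr4))
      (fun h => hBm z₂ z₄ z₁ z₃ (fun x => by rw [hfacQ x]; ring)
        (hclRm z₂ hr2 h.1) (hclRm z₄ hr4 h.2) (hMb z₁ hr1) (hMb z₃ hr3))
      (fun h => hBm z₃ z₄ z₁ z₂ (fun x => by rw [hfacQ x]; ring)
        (hclRm z₃ hr3 h.1) (hclRm z₄ hr4 h.2) (hMb z₁ hr1) (hMb z₂ hr2))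
    rcases hpick with h | h | h | h
    · exact ⟨z₁, hr1, hconvm z₁ h⟩
    · exact ⟨z₂, hr2, hconvm z₂ h⟩
    · exact ⟨z₃, hr3, hconvm z₃ h⟩
    · exact ⟨z₄, hr4, hconvm z₄ h⟩
  have hRp : ∃ zc : ℂ, Qf zc = 0 ∧ ‖zc - (rp:ℂ)‖ ≤ Cb*‖ν‖^2 := by
    have hpick := pick_one (‖(rp:ℂ)-z₁‖) (‖(rp:ℂ)-z₂‖) (‖(rp:ℂ)-z₃‖) (‖(rp:ℂ)-z₄‖)
      (3*s/4) (K*‖ν‖^2/τ) (norm_nonneg _) (norm_nonneg _) (norm_nonneg _) (norm_nonneg _)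
      (by positivity) hDrp
      (fun h => hBp z₁ z₂ z₃ z₄ (fun x => hfacQ x)
        (hclRp z₁ hr1 h.1) (hclRp z₂ hr2 h.2) (hMb z₃ hr3) (hMb z₄ hr4))
      (fun h => hBp z₁ z₃ z₂ z₄ (fun x => by rw [hfacQ x]; ring)
        (hclRp z₁ hr1 h.1) (hclRp z₃ hr3 h.2) (hMb z₂ hr2) (hMb z₄ hr4))
      (fun h => hBp z₁ z₄ z₂ z₃ (fun x => by rw [hfacQ x]; ring)
        (hclRp z₁ hr1 h.1) (hclRp z₄ hr4 h.2) (hMb z₂ hr2) (hMb z₃ hr3))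
      (fun h => hBp z₂ z₃ z₁ z₄ (fun x => by rw [hfacQ x]; ring)
        (hclRp z₂ hr2 h.1) (hclRp z₃ hr3 h.2) (hMb z₁ hr1) (hMb z₄ hr4))
      (fun h => hBp z₂ z₄ z₁ z₃ (fun x => by rw [hfacQ x]; ring)
        (hclRp z₂ hr2 h.1) (hclRp z₄ hr4 h.2) (hMb z₁ hr1) (hMb z₃ hr3))
      (fun h => hBp z₃ z₄ z₁ z₂ (fun x => by rw [hfacQ x]; ring)
        (hclRp z₃ hr3 h.1) (hclRp z₄ hr4 h.2) (hMb z₁ hr1) (hMb z₂ hr2))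
    rcases hpick with h | h | h | h
    · exact ⟨z₁, hr1, hconvp z₁ h⟩
    · exact ⟨z₂, hr2, hconvp z₂ h⟩
    · exact ⟨z₃, hr3, hconvp z₃ h⟩
    · exact ⟨z₄, hr4, hconvp z₄ h⟩
  -- small roots near -γ ν²
  have hq1C : (τ:ℂ)*((η:ℝ):ℂ)^2*((γ₁:ℝ):ℂ)^2 - (((β:ℝ):ℂ)+((η:ℝ):ℂ)^2)*((γ₁:ℝ):ℂ) + 1 = 0 := by
    exact_mod_cast hq1
  have hq2C : (τ:ℂ)*((η:ℝ):ℂ)^2*((γ₂:ℝ):ℂ)^2 - (((β:ℝ):ℂ)+((η:ℝ):ℂ)^2)*((γ₂:ℝ):ℂ) + 1 = 0 := by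
    exact_mod_cast hq2
  have hT : ∀ γ : ℝ, 0 < γ → γ ≤ γ₂ →
      ((τ:ℂ)*((η:ℝ):ℂ)^2*((γ:ℝ):ℂ)^2 - (((β:ℝ):ℂ)+((η:ℝ):ℂ)^2)*((γ:ℝ):ℂ) + 1 = 0) →
      ∃ zc : ℂ, Qf zc = 0 ∧
        ‖zc + ((γ:ℝ):ℂ)*ν^2‖ ≤ (4*(τ*γ^3+(β+1)*γ^2+γ+(τ*γ^4+γ^3))/(τ*s^2)+1)*‖ν‖^3 := by
    intro γ hγ0 hγle2 hqC
    obtain ⟨L, hLdef⟩ : ∃ x, x = τ*γ^3+(β+1)*γ^2+γ+(τ*γ^4+γ^3) := ⟨_, rfl⟩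
    have hL0 : 0 < L := by rw [hLdef]; positivity
    obtain ⟨tt, httdef⟩ : ∃ x : ℂ, x = -(((γ:ℝ):ℂ)*ν^2) := ⟨_, rfl⟩
    have htn : ‖tt‖ = γ*‖ν‖^2 := by
      rw [httdef, norm_neg, norm_mul, hν2, hcastabs, abs_of_nonneg hγ0.le]
    have htρ : ‖tt‖ ≤ ρ := by
      rw [htn]
      have s1 : γ*‖ν‖^2 ≤ γ₂*‖ν‖^2 := mul_le_mul_of_nonneg_right hγle2 (by positivity)
      have s2 : γ₂*‖ν‖^2 ≤ γ₂*δ := mul_le_mul_of_nonneg_left hn2δ hγ₂0.le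
      have s3 : γ₂*δ ≤ γ₂*(ρ/γ₂) := mul_le_mul_of_nonneg_left hδ6 hγ₂0.le
      have s4 : γ₂*(ρ/γ₂) = ρ := by field_simp
      linarith only [s1, s2, s3, s4]
    have hEv : ‖Qf tt‖ ≤ L*‖ν‖^6 := by
      have hid : Qf tt = ν^6*(((τ*γ^3-(β+1)*γ^2+γ : ℝ)):ℂ) + ν^8*(((τ*γ^4-γ^3 : ℝ)):ℂ) := by
        rw [httdef, hQf]
        push_cast
        linear_combination (ν^4)*hqC
      have p1 : (0:ℝ) ≤ τ*γ^3 := by positivity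
      have p2 : (0:ℝ) ≤ (β+1)*γ^2 := by positivity
      have p3 : (0:ℝ) ≤ γ := hγ0.le
      have p4 : (0:ℝ) ≤ τ*γ^4 := by positivity
      have p5 : (0:ℝ) ≤ γ^3 := by positivity
      have a1 : |τ*γ^3-(β+1)*γ^2+γ| ≤ τ*γ^3+(β+1)*γ^2+γ :=
        abs_le.mpr ⟨by linarith only [p1, p2, p3], by linarith only [p1, p2, p3]⟩
      have a2 : |τ*γ^4-γ^3| ≤ τ*γ^4+γ^3 :=
        abs_le.mpr ⟨by linarith only [p4, p5], by linarith only [p4, p5]⟩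
      have hn86 : ‖ν‖^8 ≤ ‖ν‖^6 := pow_le_pow_of_le_one hn0 hn1 (by norm_num)
      calc ‖Qf tt‖ ≤ ‖ν^6*(((τ*γ^3-(β+1)*γ^2+γ : ℝ)):ℂ)‖ + ‖ν^8*(((τ*γ^4-γ^3 : ℝ)):ℂ)‖ := by
            rw [hid]; exact norm_add_le _ _
        _ = ‖ν‖^6*|τ*γ^3-(β+1)*γ^2+γ| + ‖ν‖^8*|τ*γ^4-γ^3| := by
            rw [norm_mul, norm_mul, norm_pow, norm_pow, hcastabs, hcastabs]
        _ ≤ ‖ν‖^6*(τ*γ^3+(β+1)*γ^2+γ) + ‖ν‖^6*(τ*γ^4+γ^3) := by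
            have b1 := mul_le_mul_of_nonneg_left a1 (by positivity : (0:ℝ) ≤ ‖ν‖^6)
            have b2 : ‖ν‖^8*|τ*γ^4-γ^3| ≤ ‖ν‖^6*(τ*γ^4+γ^3) :=
              mul_le_mul hn86 a2 (abs_nonneg _) (by positivity)
            linarith only [b1, b2]
        _ = L*‖ν‖^6 := by rw [hLdef]; ring
    have hclT : ∀ z : ℂ, Qf z = 0 → ‖tt - z‖ < s/2 → ‖z‖ ≤ ρ := by
      intro z hz hlt
      have hzb : ‖z‖ ≤ ‖tt‖ + ‖tt - z‖ := by
        calc ‖z‖ = ‖tt - (tt - z)‖ := by rw [sub_sub_cancel]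
        _ ≤ ‖tt‖ + ‖tt - z‖ := norm_sub_le _ _
      rcases hcl z hz with h | h | h
      · exact h
      · exfalso
        have h1 : ‖(rm:ℂ)‖ - ‖(rm:ℂ) - z‖ ≤ ‖z‖ := by
          have := norm_sub_norm_le (rm:ℂ) ((rm:ℂ) - z)
          rw [sub_sub_cancel] at this
          linarith only [this]
        rw [hrmn, norm_sub_rev] at h1
        linarith only [h1, hzb, hlt, h, hsrm, hρs4, htρ]
      · exfalso
        have h1 : ‖(rp:ℂ)‖ - ‖(rp:ℂ) - z‖ ≤ ‖z‖ := by
          have := norm_sub_norm_le (rp:ℂ) ((rp:ℂ) - z)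
          rw [sub_sub_cancel] at this
          linarith only [this]
        rw [hrpn, norm_sub_rev] at h1
        linarith only [h1, hzb, hlt, h, hrph, hs1, hρs4, htρ]
    have hDt : ‖tt-z₁‖*‖tt-z₂‖*‖tt-z₃‖*‖tt-z₄‖ ≤ L*‖ν‖^6/τ := by
      have h3 := hprodG z₁ z₂ z₃ z₄ tt (hfacQ _)
      rw [h3] at hEv
      rw [le_div_iff₀ hτ, mul_comm]
      exact hEv
    have hpick := pick_two (‖tt-z₁‖) (‖tt-z₂‖) (‖tt-z₃‖) (‖tt-z₄‖)
      (s/2) (L*‖ν‖^6/τ) (norm_nonneg _) (norm_nonneg _) (norm_nonneg _) (norm_nonneg _)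
      (by positivity) hDt
      (fun h => hA2 z₁ z₂ z₃ z₄ (fun x => hfacQ x)
        (hclT z₁ hr1 h.1) (hclT z₂ hr2 h.2.1) (hclT z₃ hr3 h.2.2) (hMb z₄ hr4))
      (fun h => hA2 z₁ z₂ z₄ z₃ (fun x => by rw [hfacQ x]; ring)
        (hclT z₁ hr1 h.1) (hclT z₂ hr2 h.2.1) (hclT z₄ hr4 h.2.2) (hMb z₃ hr3))
      (fun h => hA2 z₁ z₃ z₄ z₂ (fun x => by rw [hfacQ x]; ring)
        (hclT z₁ hr1 h.1) (hclT z₃ hr3 h.2.1) (hclT z₄ hr4 h.2.2) (hMb z₂ hr2))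
      (fun h => hA2 z₂ z₃ z₄ z₁ (fun x => by rw [hfacQ x]; ring)
        (hclT z₂ hr2 h.1) (hclT z₃ hr3 h.2.1) (hclT z₄ hr4 h.2.2) (hMb z₁ hr1))
    have hconv : ∀ z : ℂ, ‖tt-z‖^2*(s/2)^2 ≤ L*‖ν‖^6/τ →
        ‖z + ((γ:ℝ):ℂ)*ν^2‖ ≤ (4*(τ*γ^3+(β+1)*γ^2+γ+(τ*γ^4+γ^3))/(τ*s^2)+1)*‖ν‖^3 := by
      intro z h
      have hzt : ‖z + ((γ:ℝ):ℂ)*ν^2‖ = ‖tt - z‖ := by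
        rw [norm_sub_rev, httdef]
        congr 1
        ring
      have hsq : ‖tt-z‖^2 ≤ (4*L/(τ*s^2))*‖ν‖^6 := by
        have hpos : (0:ℝ) < (s/2)^2 := by positivity
        have h2 : ‖tt-z‖^2 ≤ (L*‖ν‖^6/τ)/((s/2)^2) := by
          rw [le_div_iff₀ hpos]; exact h
        have h3 : (L*‖ν‖^6/τ)/((s/2)^2) = (4*L/(τ*s^2))*‖ν‖^6 := by
          field_simp; ring
        linarith only [h2, h3]
      have := sq_to_lin (‖tt-z‖) (4*L/(τ*s^2)) ‖ν‖ (norm_nonneg _) hn0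
        (by positivity) hsq
      rw [hzt, hLdef] at *
      linarith only [this]
    rcases hpick with h | h | h | h
    · exact ⟨z₁, hr1, hconv z₁ h⟩
    · exact ⟨z₂, hr2, hconv z₂ h⟩
    · exact ⟨z₃, hr3, hconv z₃ h⟩
    · exact ⟨z₄, hr4, hconv z₄ h⟩
  -- assemble
  obtain ⟨za, hza, hba⟩ := hT γ₁ hγ₁0 hγle hq1C
  obtain ⟨zb, hzb, hbb⟩ := hT γ₂ hγ₂0 le_rfl hq2C
  obtain ⟨zc, hzc, hbc⟩ := hRm
  obtain ⟨zd, hzd, hbd⟩ := hRp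
  have hn21 : ‖ν‖^2 ≤ ‖ν‖ := by
    calc ‖ν‖^2 = ‖ν‖*‖ν‖ := sq ‖ν‖ ▸ rfl
    _ ≤ ‖ν‖*1 := mul_le_mul_of_nonneg_left hn1 hn0
    _ = ‖ν‖ := mul_one _
  have hγ1eq : (((β + η ^ 2) - Real.sqrt ((β + η ^ 2) ^ 2 - 4 * τ * η ^ 2))
      / (2 * τ * η ^ 2) : ℝ) = γ₁ := by rw [hγ₁def, hedef]
  have hγ2eq : (((β + η ^ 2) + Real.sqrt ((β + η ^ 2) ^ 2 - 4 * τ * η ^ 2))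
      / (2 * τ * η ^ 2) : ℝ) = γ₂ := by rw [hγ₂def, hedef]
  have hrmeq : ((1 - Real.sqrt (1 - 4 * η ^ 2)) / 2 : ℝ) = rm := by rw [hrmdef, hgdef]
  have hrpeq : ((1 + Real.sqrt (1 - 4 * η ^ 2)) / 2 : ℝ) = rp := by rw [hrpdef, hgdef]
  have hCa : 4*(τ*γ₁^3+(β+1)*γ₁^2+γ₁+(τ*γ₁^4+γ₁^3))/(τ*s^2)+1 ≤ C := by
    have : 4*(τ*γ₁^3+(β+1)*γ₁^2+γ₁+(τ*γ₁^4+γ₁^3))/(τ*s^2) = C01 := by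
      rw [hC01def, hL₁def]; ring_nf
    rw [this, hCdef]
    linarith only [hCb0, hC020]
  have hCb : 4*(τ*γ₂^3+(β+1)*γ₂^2+γ₂+(τ*γ₂^4+γ₂^3))/(τ*s^2)+1 ≤ C := by
    have : 4*(τ*γ₂^3+(β+1)*γ₂^2+γ₂+(τ*γ₂^4+γ₂^3))/(τ*s^2) = C02 := by
      rw [hC02def, hL₂def]; ring_nf
    rw [this, hCdef]
    linarith only [hCb0, hC010]
  have hCc : Cb ≤ C := by rw [hCdef]; linarith only [hC010, hC020]
  refine ⟨za, zb, zc, zd, ⟨?_, ?_, ?_, ?_⟩, ?_, ?_, ?_, ?_⟩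
  · rw [← hQf za]; exact hza
  · rw [← hQf zb]; exact hzb
  · rw [← hQf zc]; exact hzc
  · rw [← hQf zd]; exact hzd
  · rw [show ((((β + η ^ 2) - Real.sqrt ((β + η ^ 2) ^ 2 - 4 * τ * η ^ 2))
        / (2 * τ * η ^ 2) : ℝ) : ℂ) = ((γ₁:ℝ):ℂ) by rw [hγ1eq]]
    calc ‖za + ((γ₁:ℝ):ℂ)*ν^2‖ ≤ (4*(τ*γ₁^3+(β+1)*γ₁^2+γ₁+(τ*γ₁^4+γ₁^3))/(τ*s^2)+1)*‖ν‖^3 := hba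
    _ ≤ C*‖ν‖^3 := mul_le_mul_of_nonneg_right hCa (by positivity)
  · rw [show ((((β + η ^ 2) + Real.sqrt ((β + η ^ 2) ^ 2 - 4 * τ * η ^ 2))
        / (2 * τ * η ^ 2) : ℝ) : ℂ) = ((γ₂:ℝ):ℂ) by rw [hγ2eq]]
    calc ‖zb + ((γ₂:ℝ):ℂ)*ν^2‖ ≤ (4*(τ*γ₂^3+(β+1)*γ₂^2+γ₂+(τ*γ₂^4+γ₂^3))/(τ*s^2)+1)*‖ν‖^3 := hbb
    _ ≤ C*‖ν‖^3 := mul_le_mul_of_nonneg_right hCb (by positivity)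
  · rw [show (((1 - Real.sqrt (1 - 4 * η ^ 2)) / 2 : ℝ) : ℂ) = ((rm:ℝ):ℂ) by rw [hrmeq]]
    calc ‖zc - ((rm:ℝ):ℂ)‖ ≤ Cb*‖ν‖^2 := hbc
    _ ≤ Cb*‖ν‖ := mul_le_mul_of_nonneg_left hn21 hCb0.le
    _ ≤ C*‖ν‖ := mul_le_mul_of_nonneg_right hCc hn0
  · rw [show (((1 + Real.sqrt (1 - 4 * η ^ 2)) / 2 : ℝ) : ℂ) = ((rp:ℝ):ℂ) by rw [hrpeq]]
    calc ‖zd - ((rp:ℝ):ℂ)‖ ≤ Cb*‖ν‖^2 := hbd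
    _ ≤ Cb*‖ν‖ := mul_le_mul_of_nonneg_left hn21 hCb0.le
    _ ≤ C*‖ν‖ := mul_le_mul_of_nonneg_right hCc hn0








theorem stmt_17 (τ β η : ℝ) (hτ : 0 < τ) (hβ : 0 < β) (hη : 0 < η) (hη' : η < 1 / 2)
    (hτβ : τ < β) (hdisc : (β + η ^ 2) ^ 2 > 4 * τ * η ^ 2) :
    let Q : ℂ → ℂ → ℂ := fun m ν =>
      (τ : ℂ) * m ^ 4 + (ν ^ 2 - τ) * m ^ 3
        + ((η : ℂ) ^ 2 * τ - ((β : ℂ) + 1) * ν ^ 2) * m ^ 2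
        + ((η : ℂ) ^ 2 + β - ν ^ 2) * ν ^ 2 * m + ν ^ 4
    ∃ δ > (0 : ℝ), ∃ C > (0 : ℝ), ∃ m₁ m₂ m₃ m₄ : ℂ → ℂ,
      ∀ ν : ℂ, ‖ν‖ ≤ δ →
        (Q (m₁ ν) ν = 0 ∧ Q (m₂ ν) ν = 0 ∧ Q (m₃ ν) ν = 0 ∧ Q (m₄ ν) ν = 0) ∧
        ‖m₁ ν + ((((β + η ^ 2) - Real.sqrt ((β + η ^ 2) ^ 2 - 4 * τ * η ^ 2))
            / (2 * τ * η ^ 2) : ℝ) : ℂ) * ν ^ 2‖ ≤ C * ‖ν‖ ^ 3 ∧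
        ‖m₂ ν + ((((β + η ^ 2) + Real.sqrt ((β + η ^ 2) ^ 2 - 4 * τ * η ^ 2))
            / (2 * τ * η ^ 2) : ℝ) : ℂ) * ν ^ 2‖ ≤ C * ‖ν‖ ^ 3 ∧
        ‖m₃ ν - (((1 - Real.sqrt (1 - 4 * η ^ 2)) / 2 : ℝ) : ℂ)‖ ≤ C * ‖ν‖ ∧
        ‖m₄ ν - (((1 + Real.sqrt (1 - 4 * η ^ 2)) / 2 : ℝ) : ℂ)‖ ≤ C * ‖ν‖ := by
  intro Q
  obtain ⟨δ, hδ, C, hC, hper⟩ := per τ β η hτ hβ hη hη' hτβ hdisc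
  have key : ∀ ν : ℂ, ∃ a b c d : ℂ, ‖ν‖ ≤ δ →
      ((Q a ν = 0 ∧ Q b ν = 0 ∧ Q c ν = 0 ∧ Q d ν = 0) ∧
        ‖a + ((((β + η ^ 2) - Real.sqrt ((β + η ^ 2) ^ 2 - 4 * τ * η ^ 2))
            / (2 * τ * η ^ 2) : ℝ) : ℂ) * ν ^ 2‖ ≤ C * ‖ν‖ ^ 3 ∧
        ‖b + ((((β + η ^ 2) + Real.sqrt ((β + η ^ 2) ^ 2 - 4 * τ * η ^ 2))
            / (2 * τ * η ^ 2) : ℝ) : ℂ) * ν ^ 2‖ ≤ C * ‖ν‖ ^ 3 ∧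
        ‖c - (((1 - Real.sqrt (1 - 4 * η ^ 2)) / 2 : ℝ) : ℂ)‖ ≤ C * ‖ν‖ ∧
        ‖d - (((1 + Real.sqrt (1 - 4 * η ^ 2)) / 2 : ℝ) : ℂ)‖ ≤ C * ‖ν‖) := by
    intro ν
    by_cases h : ‖ν‖ ≤ δ
    · obtain ⟨a, b, c, d, ⟨h1, h2, h3, h4⟩, h5, h6, h7, h8⟩ := hper ν h
      exact ⟨a, b, c, d, fun _ => ⟨⟨h1, h2, h3, h4⟩, h5, h6, h7, h8⟩⟩
    · exact ⟨0, 0, 0, 0, fun hc => absurd hc h⟩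
  choose m₁ m₂ m₃ m₄ hm using key
  exact ⟨δ, hδ, C, hC, m₁, m₂, m₃, m₄, fun ν hν => hm ν hν⟩
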